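/- There exist a complex Hilbert space H, a power bounded operator T on H, and a vector x ∈ H such that some strictly increasing sequence of nonnegative integers {n_k} satisfies ⟨T^{n_k} x, z⟩ → 0 for every z ∈ H, yet no strictly increasing sequence {m_k} with sup_k (m_{k+1} − m_k) < ∞ satisfies ⟨T^{m_k} x, z⟩ → 0 for every z ∈ H. That is, the existence of a subsequence of {T^n x} converging weakly to zero does not imply the existence of a boundedly spaced such subsequence. -/

import Mathlib

open Filter
open scoped ENNReal

noncomputable section FglSec

namespace Fgl

abbrev Idx : Type := ℕ ⊕ ℕ
abbrev Hsp : Type := lp (fun _ : Idx => ℂ) 2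

/-- `Pj n m j` : the lacunary index `4^j` is "active" for output coordinate `m` at time `n`. -/
def Pj (n m j : ℕ) : Prop := 4 ^ j < m + n ∧ m + n ≤ 2 * 4 ^ j + 1 ∧ m ≤ 4 ^ j

lemma four_pow_pos (j : ℕ) : 0 < 4 ^ j := Nat.pow_pos (n := j) (by norm_num)

lemma four_pow_mul {j j' : ℕ} (h : j < j') : 4 * 4 ^ j ≤ 4 ^ j' := by
  calc 4 * 4 ^ j = 4 ^ (j + 1) := by ring
  _ ≤ 4 ^ j' := Nat.pow_le_pow_right (by norm_num) h

lemma four_pow_lt_iff {j j' : ℕ} : 4 ^ j < 4 ^ j' ↔ j < j' :=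
  Nat.pow_lt_pow_iff_right (by norm_num)

lemma Pj_unique {n m j j' : ℕ} (h : Pj n m j) (h' : Pj n m j') : j = j' := by
  obtain ⟨h1, h2, h3⟩ := h
  obtain ⟨h1', h2', h3'⟩ := h'
  rcases lt_trichotomy j j' with hlt | he | hlt
  · have := four_pow_mul hlt
    have := four_pow_pos j
    omega
  · exact he
  · have := four_pow_mul hlt
    have := four_pow_pos j'
    omega

open Classical in
def jf (n m : ℕ) : ℕ := if h : ∃ j, Pj n m j then h.choose else 0

lemma jf_eq {n m j : ℕ} (h : Pj n m j) : jf n m = j := by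
  have he : ∃ j, Pj n m j := ⟨j, h⟩
  rw [jf, dif_pos he]
  exact Pj_unique he.choose_spec h

def src (n m : ℕ) : ℕ := 2 * 4 ^ (jf n m) + 1 - (m + n)

lemma src_spec {n m j : ℕ} (h : Pj n m j) : src n m + (m + n) = 2 * 4 ^ j + 1 := by
  rw [src, jf_eq h]
  have := h.2.1
  omega

lemma src_inj_core {n m m' j j' : ℕ} (h : Pj n m j) (h' : Pj n m' j')
    (hs : src n m = src n m') (hlt : j < j') : m = m' := by
  have e1 := src_spec h
  have e2 := src_spec h'
  have h4 := four_pow_mul hlt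
  have := four_pow_pos j
  have := h'.2.2
  omega

lemma src_inj {n m m' j j' : ℕ} (h : Pj n m j) (h' : Pj n m' j')
    (hs : src n m = src n m') : m = m' := by
  rcases lt_trichotomy j j' with hlt | he | hlt
  · exact src_inj_core h h' hs hlt
  · subst he
    have e1 := src_spec h
    have e2 := src_spec h'
    omega
  · exact (src_inj_core h' h hs.symm hlt).symm

open Classical in
/-- The coordinate action of `T^n`. -/
def G (n : ℕ) (u : Idx → ℂ) : Idx → ℂ
  | Sum.inl m => u (Sum.inl (m + n)) + if ∃ j, Pj n m j then u (Sum.inr (src n m)) else 0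
  | Sum.inr m => if n ≤ m then u (Sum.inr (m - n)) else 0

lemma G_add (n : ℕ) (u v : Idx → ℂ) : G n (u + v) = G n u + G n v := by
  funext z
  cases z with
  | inl m => simp only [G, Pi.add_apply]; split_ifs <;> ring
  | inr m => simp only [G, Pi.add_apply]; split_ifs <;> ring

lemma G_smul (n : ℕ) (c : ℂ) (u : Idx → ℂ) : G n (c • u) = c • G n u := by
  funext z
  cases z with
  | inl m => simp only [G, Pi.smul_apply, smul_eq_mul]; split_ifs <;> ring
  | inr m => simp only [G, Pi.smul_apply, smul_eq_mul]; split_ifs <;> ring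

lemma G_zero (u : Idx → ℂ) : G 0 u = u := by
  funext z
  cases z with
  | inl m =>
    have hno : ¬ ∃ j, Pj 0 m j := by
      rintro ⟨j, h1, h2, h3⟩
      omega
    simp only [G, if_neg hno, add_zero, Nat.add_zero]
  | inr m => simp only [G, Nat.sub_zero, if_pos (Nat.zero_le m)]

lemma Pj_one {r j : ℕ} : Pj 1 r j ↔ 4 ^ j = r := by
  constructor
  · rintro ⟨h1, h2, h3⟩; omega
  · intro h; exact ⟨by omega, by omega, by omega⟩

lemma Gstep (n : ℕ) (u : Idx → ℂ) : G n (G 1 u) = G (n + 1) u := by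
  funext z
  cases z with
  | inr m =>
    simp only [G]
    split_ifs with h1 h2 h2 <;> first
      | rfl
      | omega
  | inl m =>
    simp only [G]
    rw [show m + (n + 1) = m + n + 1 from rfl, add_assoc]
    congr 1
    by_cases hA : ∃ j : ℕ, 4 ^ j = m + n
    · obtain ⟨j, hj⟩ := hA
      have hPj1 : ∃ j', Pj 1 (m + n) j' := ⟨j, Pj_one.mpr hj⟩
      rw [if_pos hPj1]
      have hsrc1 : src 1 (m + n) = m + n := by
        have := src_spec (Pj_one.mpr hj); omega
      have hnot : ¬ ∃ j₁, Pj n m j₁ := by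
        rintro ⟨j₁, hh⟩
        have hlt : j₁ < j := by
          rw [← four_pow_lt_iff]
          have := hh.1; omega
        have := four_pow_mul hlt
        have := hh.2.1
        have := four_pow_pos j₁
        omega
      rw [if_neg hnot, add_zero, hsrc1]
      have hPj' : Pj (n + 1) m j := ⟨by omega, by omega, by omega⟩
      rw [if_pos ⟨j, hPj'⟩]
      have hq : src (n + 1) m = m + n := by
        have := src_spec hPj'; omega
      rw [hq]
    · have hno1 : ¬ ∃ j', Pj 1 (m + n) j' := by
        rintro ⟨j, hj⟩; exact hA ⟨j, Pj_one.mp hj⟩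
      rw [if_neg hno1, zero_add]
      by_cases hB : ∃ j, Pj n m j
      · obtain ⟨j, hj⟩ := hB
        rw [if_pos ⟨j, hj⟩]
        have hs := src_spec hj
        by_cases hs1 : 1 ≤ src n m
        · have hPj' : Pj (n + 1) m j := ⟨by have := hj.1; omega, by omega, hj.2.2⟩
          rw [if_pos hs1, if_pos ⟨j, hPj'⟩]
          have := src_spec hPj'
          rw [show src n m - 1 = src (n + 1) m from by omega]
        · rw [if_neg hs1]
          have hnot' : ¬ ∃ j', Pj (n + 1) m j' := by
            rintro ⟨j', h'⟩
            have hjj : j < j' := by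
              rw [← four_pow_lt_iff]
              have := h'.2.1; have := hj.2.1; have := h'.1; omega
            have := four_pow_mul hjj
            have := four_pow_pos j
            have := h'.1
            omega
          rw [if_neg hnot']
      · rw [if_neg hB]
        have hnot' : ¬ ∃ j, Pj (n + 1) m j := by
          rintro ⟨j, h'⟩
          apply hB
          refine ⟨j, ?_, ?_, h'.2.2⟩
          · have : 4 ^ j ≠ m + n := fun he => hA ⟨j, he⟩
            have := h'.1; omega
          · have := h'.2.1; omega
        rw [if_neg hnot']

/-! ### Partial-injection bounds -/

open Classical in
def pif (u : Hsp) (D : Idx → Prop) (σ : Idx → Idx) : Idx → ℂ :=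
  fun x => if D x then (u : Idx → ℂ) (σ x) else 0

lemma two_toReal : (2 : ℝ≥0∞).toReal = (2 : ℝ) := by norm_num

lemma u_summable (u : Hsp) : Summable fun i => ‖(u : Idx → ℂ) i‖ ^ (2 : ℝ) := by
  have := (memℓp_gen_iff (p := 2) (by norm_num)).1 (lp.memℓp u)
  rwa [two_toReal] at this

lemma pif_summable (u : Hsp) {D : Idx → Prop} {σ : Idx → Idx}
    (hinj : ∀ ⦃x y⦄, D x → D y → σ x = σ y → x = y) :
    Summable (fun x => ‖pif u D σ x‖ ^ (2 : ℝ)) ∧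
      ∑' x, ‖pif u D σ x‖ ^ (2 : ℝ) ≤ ∑' i, ‖(u : Idx → ℂ) i‖ ^ (2 : ℝ) := by
  classical
  have hu := u_summable u
  set s : Set Idx := {x | D x} with hs
  have einj : Function.Injective (fun x : s => σ x.1) := by
    intro a b hab
    exact Subtype.ext (hinj a.2 b.2 hab)
  have h1 : Summable ((fun y => ‖(u : Idx → ℂ) y‖ ^ (2 : ℝ)) ∘ (fun x : s => σ x.1)) :=
    hu.comp_injective einj
  have heq : (fun x : Idx => ‖pif u D σ x‖ ^ (2 : ℝ))
      = s.indicator (fun x => ‖(u : Idx → ℂ) (σ x)‖ ^ (2 : ℝ)) := by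
    funext x
    by_cases hx : D x
    · rw [Set.indicator_of_mem (show x ∈ s from hx)]
      simp only [pif, if_pos hx]
    · rw [Set.indicator_of_notMem (show x ∉ s from hx)]
      simp only [pif, if_neg hx, norm_zero]
      rw [Real.zero_rpow (by norm_num)]
  have hsum : Summable (fun x => ‖pif u D σ x‖ ^ (2 : ℝ)) := by
    rw [heq]
    exact summable_subtype_iff_indicator.mp h1
  refine ⟨hsum, ?_⟩
  calc ∑' x, ‖pif u D σ x‖ ^ (2 : ℝ)
      = ∑' x : s, ‖(u : Idx → ℂ) (σ x.1)‖ ^ (2 : ℝ) := by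
        rw [heq, ← tsum_subtype]
    _ ≤ ∑' i, ‖(u : Idx → ℂ) i‖ ^ (2 : ℝ) := by
        refine Summable.tsum_le_tsum_of_inj (fun x : s => σ x.1) einj
          (fun c _ => by positivity) (fun a => le_rfl) h1 hu

lemma pif_mem (u : Hsp) {D : Idx → Prop} {σ : Idx → Idx}
    (hinj : ∀ ⦃x y⦄, D x → D y → σ x = σ y → x = y) : Memℓp (pif u D σ) 2 := by
  apply memℓp_gen
  rw [two_toReal]
  exact (pif_summable u hinj).1

lemma pif_norm (u : Hsp) {D : Idx → Prop} {σ : Idx → Idx}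
    (hinj : ∀ ⦃x y⦄, D x → D y → σ x = σ y → x = y) :
    ‖(⟨pif u D σ, pif_mem u hinj⟩ : Hsp)‖ ≤ ‖u‖ := by
  have hp : 0 < (2 : ℝ≥0∞).toReal := by norm_num
  rw [lp.norm_eq_tsum_rpow hp, lp.norm_eq_tsum_rpow hp u, two_toReal]
  apply Real.rpow_le_rpow
  · exact tsum_nonneg fun i => by positivity
  · exact (pif_summable u hinj).2
  · norm_num

/-! ### The operator -/

def Da (n : ℕ) : Idx → Prop := Sum.elim (fun _ => True) (fun m => n ≤ m)
def σa (n : ℕ) : Idx → Idx := Sum.elim (fun m => Sum.inl (m + n)) (fun m => Sum.inr (m - n))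
def Db (n : ℕ) : Idx → Prop := Sum.elim (fun m => ∃ j, Pj n m j) (fun _ => False)
def σb (n : ℕ) : Idx → Idx := Sum.elim (fun m => Sum.inr (src n m)) (fun _ => Sum.inl 0)

lemma inj_a (n : ℕ) : ∀ ⦃x y : Idx⦄, Da n x → Da n y → σa n x = σa n y → x = y := by
  rintro (m | m) (m' | m') hx hy h <;>
    simp only [σa, Sum.elim_inl, Sum.elim_inr, Sum.inl.injEq, Sum.inr.injEq,
      reduceCtorEq] at h
  · simp only [Sum.inl.injEq]; omega
  · simp only [Da, Sum.elim_inr] at hx hy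
    simp only [Sum.inr.injEq]; omega

lemma inj_b (n : ℕ) : ∀ ⦃x y : Idx⦄, Db n x → Db n y → σb n x = σb n y → x = y := by
  rintro (m | m) (m' | m') hx hy h
  · simp only [Db, Sum.elim_inl] at hx hy
    simp only [σb, Sum.elim_inl, Sum.inr.injEq] at h
    obtain ⟨j, hj⟩ := hx
    obtain ⟨j', hj'⟩ := hy
    simp only [Sum.inl.injEq]
    exact src_inj hj hj' h
  · exact hy.elim
  · exact hx.elim
  · exact hy.elim

lemma G_decomp (n : ℕ) (u : Hsp) :
    G n (u : Idx → ℂ) = pif u (Da n) (σa n) + pif u (Db n) (σb n) := by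
  classical
  funext z
  cases z with
  | inl m =>
    simp only [G, pif, Pi.add_apply, Da, Db, σa, σb, Sum.elim_inl, if_pos trivial, ↓reduceIte]; congr
  | inr m =>
    simp only [G, pif, Pi.add_apply, Da, Db, σa, σb, Sum.elim_inr, if_neg (not_false), ↓reduceIte, add_zero]; congr

lemma G_mem (n : ℕ) (u : Hsp) : Memℓp (G n (u : Idx → ℂ)) 2 := by
  rw [G_decomp]
  exact (pif_mem u (inj_a n)).add (pif_mem u (inj_b n))

def glp (n : ℕ) (u : Hsp) : Hsp := ⟨G n (u : Idx → ℂ), G_mem n u⟩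

lemma glp_coe (n : ℕ) (u : Hsp) : ((glp n u : Hsp) : Idx → ℂ) = G n (u : Idx → ℂ) := rfl

lemma glp_norm (n : ℕ) (u : Hsp) : ‖glp n u‖ ≤ 2 * ‖u‖ := by
  have hdec : glp n u
      = (⟨pif u (Da n) (σa n), pif_mem u (inj_a n)⟩ : Hsp)
        + (⟨pif u (Db n) (σb n), pif_mem u (inj_b n)⟩ : Hsp) := by
    apply lp.ext
    rw [lp.coeFn_add]
    exact G_decomp n u
  rw [hdec]
  calc ‖_ + _‖ ≤ _ := norm_add_le _ _
    _ ≤ ‖u‖ + ‖u‖ := add_le_add (pif_norm u (inj_a n)) (pif_norm u (inj_b n))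
    _ = 2 * ‖u‖ := by ring

def Tlm : Hsp →ₗ[ℂ] Hsp where
  toFun u := glp 1 u
  map_add' u v := by
    apply lp.ext
    rw [lp.coeFn_add, glp_coe, glp_coe, glp_coe, lp.coeFn_add, G_add]
  map_smul' c u := by
    apply lp.ext
    rw [RingHom.id_apply, lp.coeFn_smul, glp_coe, glp_coe, lp.coeFn_smul, G_smul]

def T : Hsp →L[ℂ] Hsp := Tlm.mkContinuous 2 (fun u => glp_norm 1 u)

lemma T_coe (u : Hsp) : ((T u : Hsp) : Idx → ℂ) = G 1 (u : Idx → ℂ) := rfl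

lemma T_pow_coe (n : ℕ) : ∀ u : Hsp, (((T ^ n) u : Hsp) : Idx → ℂ) = G n (u : Idx → ℂ) := by
  induction n with
  | zero => intro u; rw [pow_zero, G_zero]; rfl
  | succ n ih =>
    intro u
    rw [pow_succ, ContinuousLinearMap.mul_apply, ih (T u), T_coe, Gstep]

lemma T_pow_eq (n : ℕ) (u : Hsp) : (T ^ n) u = glp n u := lp.ext (T_pow_coe n u)

lemma T_pow_norm (n : ℕ) : ‖T ^ n‖ ≤ 2 := by
  apply ContinuousLinearMap.opNorm_le_bound _ (by norm_num)
  intro u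
  rw [T_pow_eq]
  exact glp_norm n u

/-! ### The vector and the two clauses -/

lemma single_coe (i : Idx) (c : ℂ) (z : Idx) :
    ((lp.single 2 i c : Hsp) : Idx → ℂ) z = if z = i then c else 0 := by
  rw [lp.single_apply]
  by_cases h : z = i
  · rw [Pi.single_apply]
  · rw [Pi.single_apply]

def xv : Hsp := lp.single 2 (Sum.inr 0) 1

lemma xv_coe (z : Idx) : (xv : Idx → ℂ) z = if z = Sum.inr 0 then 1 else 0 :=
  single_coe _ _ z


lemma src_ne_zero {k m j : ℕ} (h : Pj (3 * 4 ^ k + 1) m j) :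
    src (3 * 4 ^ k + 1) m ≠ 0 := by
  intro h0
  have hs := src_spec h
  have h3 := h.2.2
  rcases Nat.lt_or_ge j (k + 1) with hjk | hjk
  · have h5 : 4 ^ j ≤ 4 ^ k := Nat.pow_le_pow_right (by norm_num) (by omega)
    have := four_pow_pos k
    omega
  · have h5 : 4 * 4 ^ k ≤ 4 ^ j := four_pow_mul (by omega)
    have := four_pow_pos k
    omega

lemma T_pow_x (k : ℕ) :
    (T ^ (3 * 4 ^ k + 1)) xv = lp.single 2 (Sum.inr (3 * 4 ^ k + 1)) (1 : ℂ) := by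
  apply lp.ext
  rw [T_pow_coe]
  funext z
  cases z with
  | inl m =>
    simp only [G, xv_coe, single_coe, reduceCtorEq, if_false, zero_add]
    by_cases hE : ∃ j, Pj (3 * 4 ^ k + 1) m j
    · rw [if_pos hE]
      obtain ⟨j, hj⟩ := hE
      rw [if_neg (by simp only [Sum.inr.injEq]; exact src_ne_zero hj)]
    · rw [if_neg hE]
  | inr m =>
    simp only [G, xv_coe, single_coe, Sum.inr.injEq]
    split_ifs <;> first | rfl | omega

lemma clause2 : ∃ n : ℕ → ℕ, StrictMono n ∧ ∀ z : Hsp,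
    Tendsto (fun k => (inner ℂ ((T ^ n k) xv) z : ℂ)) atTop (nhds 0) := by
  refine ⟨fun k => 3 * 4 ^ k + 1, ?_, ?_⟩
  · intro a b hab
    have h := four_pow_lt_iff.mpr hab
    simp only
    omega
  · intro z
    have h1 : ∀ k, (inner ℂ ((T ^ (3 * 4 ^ k + 1)) xv) z : ℂ)
        = (z : Idx → ℂ) (Sum.inr (3 * 4 ^ k + 1)) := by
      intro k
      rw [T_pow_x, lp.inner_single_left]
      simp [RCLike.inner_apply]
    simp only [h1]
    have hzr : Summable fun m : ℕ => ‖(z : Idx → ℂ) (Sum.inr m)‖ ^ (2 : ℝ) :=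
      (u_summable z).comp_injective Sum.inr_injective
    have h0 : Tendsto (fun m : ℕ => ‖(z : Idx → ℂ) (Sum.inr m)‖ ^ (2 : ℝ)) atTop (nhds 0) :=
      hzr.tendsto_atTop_zero
    have h0' : Tendsto (fun m : ℕ => ‖(z : Idx → ℂ) (Sum.inr m)‖) atTop (nhds 0) := by
      have hc := (Real.continuous_sqrt.tendsto 0).comp h0
      have heq : (fun m : ℕ => Real.sqrt (‖(z : Idx → ℂ) (Sum.inr m)‖ ^ (2 : ℝ)))
          = fun m : ℕ => ‖(z : Idx → ℂ) (Sum.inr m)‖ := by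
        funext m
        rw [Real.rpow_two, Real.sqrt_sq (norm_nonneg _)]
      rw [Function.comp_def, heq] at hc
      rwa [Real.sqrt_zero] at hc
    have hz0 : Tendsto (fun m : ℕ => (z : Idx → ℂ) (Sum.inr m)) atTop (nhds 0) :=
      tendsto_zero_iff_norm_tendsto_zero.mpr h0'
    have hmt : Tendsto (fun k : ℕ => 3 * 4 ^ k + 1) atTop atTop := by
      apply tendsto_atTop_mono (fun k => ?_) tendsto_id
      have := Nat.lt_pow_self (n := k) (by norm_num : 1 < 4)
      simp only [id]
      omega
    exact hz0.comp hmt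

lemma T_pow_x_inl {n a0 j : ℕ} (hPj : Pj n a0 j) (hsrc : src n a0 = 0) :
    ((T ^ n) xv : Idx → ℂ) (Sum.inl a0) = 1 := by
  rw [T_pow_coe]
  simp only [G, xv_coe, reduceCtorEq, if_false, zero_add]
  rw [if_pos ⟨j, hPj⟩, hsrc, if_pos rfl]

lemma clause3 : ¬ (∃ m : ℕ → ℕ, StrictMono m ∧ (∃ M : ℕ, ∀ k, m (k + 1) - m k ≤ M) ∧
    ∀ z : Hsp, Tendsto (fun k => (inner ℂ ((T ^ m k) xv) z : ℂ)) atTop (nhds 0)) := by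
  rintro ⟨m, hmono, ⟨M, hM⟩, hconv⟩
  have hM' : ∀ k, m (k + 1) ≤ m k + M := by
    intro k
    have h1 := hM k
    have h2 := hmono (show k < k + 1 by omega)
    omega
  have hM1 : 1 ≤ M := by
    have h1 := hM 0
    have h2 := hmono (show 0 < 0 + 1 by omega)
    omega
  have key : ∀ j : ℕ, m 0 + M ≤ 4 ^ j →
      ∃ k a, 1 ≤ a ∧ a ≤ M ∧ a ≤ 4 ^ j ∧ a + m k = 2 * 4 ^ j + 1 := by
    intro j hj
    have h4 := four_pow_pos j
    have hex : ∃ k, 2 * 4 ^ j + 1 - M ≤ m k :=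
      ⟨2 * 4 ^ j + 1, by have := hmono.le_apply (x := 2 * 4 ^ j + 1); omega⟩
    classical
    have hk0 := Nat.find_spec hex
    set k0 := Nat.find hex with hk0def
    have hk0ne : k0 ≠ 0 := by
      intro h0
      rw [h0] at hk0
      omega
    have hlt : ¬ (2 * 4 ^ j + 1 - M ≤ m (k0 - 1)) :=
      Nat.find_min hex (show k0 - 1 < k0 by omega)
    have hstep : m k0 ≤ m (k0 - 1) + M := by
      have := hM' (k0 - 1)
      rwa [show k0 - 1 + 1 = k0 by omega] at this
    exact ⟨k0, 2 * 4 ^ j + 1 - m k0, by omega, by omega, by omega, by omega⟩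
  have hch : ∀ j : ℕ, ∃ ka : ℕ × ℕ, 1 ≤ ka.2 ∧ ka.2 ≤ M ∧ ka.2 ≤ 4 ^ (j + (m 0 + M)) ∧
      ka.2 + m ka.1 = 2 * 4 ^ (j + (m 0 + M)) + 1 := by
    intro j
    have hje : m 0 + M ≤ 4 ^ (j + (m 0 + M)) := by
      have h1 : j + (m 0 + M) < 4 ^ (j + (m 0 + M)) := Nat.lt_pow_self (by norm_num)
      omega
    obtain ⟨k, a, h1, h2, h3, h4⟩ := key _ hje
    exact ⟨(k, a), h1, h2, h3, h4⟩
  choose F hF1 hF2 hF3 hF4 using hch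
  obtain ⟨v, hv⟩ := Finite.exists_infinite_fiber
    (fun j : ℕ => (⟨(F j).2 - 1, by have := hF2 j; have := hF1 j; omega⟩ : Fin M))
  have hvinf : {j : ℕ | (F j).2 = (v : ℕ) + 1}.Infinite := by
    apply (Set.infinite_coe_iff.mp hv).mono
    intro j hj
    simp only [Set.mem_preimage, Set.mem_singleton_iff] at hj
    have h1 := hF1 j
    have h2 : (F j).2 - 1 = (v : ℕ) := congrArg Fin.val hj
    simp only [Set.mem_setOf_eq]
    omega
  set a0 : ℕ := (v : ℕ) + 1 with ha0
  have hz := hconv (lp.single 2 (Sum.inl a0) (1 : ℂ))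
  obtain ⟨K, hK⟩ := (Metric.tendsto_atTop.mp hz) 1 one_pos
  obtain ⟨j, hjmem, hjlarge⟩ := hvinf.exists_gt (m K + M)
  have hj4 : j + (m 0 + M) < 4 ^ (j + (m 0 + M)) := Nat.lt_pow_self (by norm_num)
  have hFj2 : (F j).2 = a0 := hjmem
  have hsum : a0 + m (F j).1 = 2 * 4 ^ (j + (m 0 + M)) + 1 := by
    rw [← hFj2]; exact hF4 j
  have ha0M : a0 ≤ M := by rw [← hFj2]; exact hF2 j
  have ha04 : a0 ≤ 4 ^ (j + (m 0 + M)) := by rw [← hFj2]; exact hF3 j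
  have hPw : Pj (m (F j).1) a0 (j + (m 0 + M)) := by
    have := four_pow_pos (j + (m 0 + M))
    exact ⟨by omega, by omega, ha04⟩
  have hsrc0 : src (m (F j).1) a0 = 0 := by
    have := src_spec hPw
    omega
  have hval : ((T ^ (m (F j).1)) xv : Idx → ℂ) (Sum.inl a0) = 1 := T_pow_x_inl hPw hsrc0
  have hinner : (inner ℂ ((T ^ (m (F j).1)) xv) (lp.single 2 (Sum.inl a0) (1 : ℂ)) : ℂ) = 1 := by
    rw [lp.inner_single_right, RCLike.inner_apply, hval]
    simp
  have hk_big : K ≤ (F j).1 := by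
    by_contra hc
    push_neg at hc
    have hmlt : m (F j).1 < m K := hmono hc
    omega
  have hfin := hK (F j).1 hk_big
  rw [hinner] at hfin
  rw [dist_zero_right] at hfin
  norm_num at hfin

end Fgl

end FglSec



/-- There exist a complex Hilbert space `H`, a power bounded operator `T` on `H`, and a
vector `x ∈ H` such that some strictly increasing sequence `{n_k}` of nonnegative
integers satisfies `⟨T^{n_k} x, z⟩ → 0` for every `z ∈ H`, yet no strictly increasing
sequence `{m_k}` with bounded increments (`sup_k (m_{k+1} - m_k) < ∞`) satisfies
`⟨T^{m_k} x, z⟩ → 0` for every `z ∈ H`: the existence of a subsequence of `{T^n x}`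
converging weakly to zero does not imply the existence of a boundedly spaced one. -/
theorem exists_weak_quasistability_without_boundedly_spaced_subsequence :
    ∃ (H : Type) (_ : NormedAddCommGroup H) (_ : InnerProductSpace ℂ H)
      (_ : CompleteSpace H) (T : H →L[ℂ] H) (x : H),
      (∃ C : ℝ, ∀ n : ℕ, ‖T ^ n‖ ≤ C) ∧
      (∃ n : ℕ → ℕ, StrictMono n ∧ ∀ z : H,
        Tendsto (fun k => (inner ℂ ((T ^ n k) x) z : ℂ)) atTop (nhds 0)) ∧
      ¬ (∃ m : ℕ → ℕ, StrictMono m ∧ (∃ M : ℕ, ∀ k, m (k + 1) - m k ≤ M) ∧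
        ∀ z : H,
          Tendsto (fun k => (inner ℂ ((T ^ m k) x) z : ℂ)) atTop (nhds 0)) := by
  exact ⟨Fgl.Hsp, inferInstance, inferInstance, inferInstance, Fgl.T, Fgl.xv,
    ⟨2, Fgl.T_pow_norm⟩, Fgl.clause2, Fgl.clause3⟩
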